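/- Let φ be an instance of 2-Clause 3-SAT and G(φ) the graph of the wcol_2 reduction (clause gadgets u_i^1,…,u_i^6 with optional f_i, f'_i, literal pairs v_j v'_j, and edges from literal vertices to all six clause vertices of clauses containing them). If wcol_2(G(φ)) ≤ 5 then φ is satisfiable; the assignment setting x_j false when v_j <_σ v'_j and true otherwise (for a witnessing order σ) satisfies φ. -/

import Mathlib

open SimpleGraph

variable {V : Type*}

/-- The strict order relation of a linear order. -/
def olt (σ : LinearOrder V) (a b : V) : Prop := σ.lt a b

/-- The set of vertices `r`-reachable from `u` with respect to `σ`: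
vertices `v >_σ u` joined to `u` by a path of length at most `r`
whose internal vertices all precede `u` in `σ`. -/
def reachSet (G : SimpleGraph V) (σ : LinearOrder V) (r : ℕ) (u : V) : Set V :=
  {v | olt σ u v ∧ ∃ p : G.Walk u v, p.IsPath ∧ p.length ≤ r ∧
    ∀ w ∈ p.support, w ≠ u → w ≠ v → olt σ w u}

/-- The set of vertices weakly `r`-reachable from `u` with respect to `σ`:
vertices `v >_σ u` joined to `u` by a path of length at most `r`
whose internal vertices all precede `v` in `σ`. -/
def wreachSet (G : SimpleGraph V) (σ : LinearOrder V) (r : ℕ) (u : V) : Set V :=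
  {v | olt σ u v ∧ ∃ p : G.Walk u v, p.IsPath ∧ p.length ≤ r ∧
    ∀ w ∈ p.support, w ≠ u → w ≠ v → olt σ w v}

/-- `col_r(G_σ)`: the maximum `r`-reach over all vertices. -/
noncomputable def colOrd [Fintype V] (G : SimpleGraph V) (σ : LinearOrder V) (r : ℕ) : ℕ :=
  Finset.univ.sup fun u => (reachSet G σ r u).ncard

/-- `wcol_r(G_σ)`: the maximum weak `r`-reach over all vertices. -/
noncomputable def wcolOrd [Fintype V] (G : SimpleGraph V) (σ : LinearOrder V) (r : ℕ) : ℕ :=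
  Finset.univ.sup fun u => (wreachSet G σ r u).ncard

/-- The `r`-coloring number of `G`. -/
noncomputable def colNum [Fintype V] (G : SimpleGraph V) (r : ℕ) : ℕ :=
  ⨅ σ : LinearOrder V, colOrd G σ r

/-- The weak `r`-coloring number of `G`. -/
noncomputable def wcolNum [Fintype V] (G : SimpleGraph V) (r : ℕ) : ℕ :=
  ⨅ σ : LinearOrder V, wcolOrd G σ r

/-- `p` is an `r`-qualifying path from `u` with respect to the (possibly partial)
order `lt`: a path of length at most `r` ending at a vertex `v` with `v ≠ u`,
`v` not `<` `u`, all of whose internal vertices are `< u`. -/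
def IsQual (G : SimpleGraph V) (lt : V → V → Prop) (r : ℕ) {u v : V} (p : G.Walk u v) : Prop :=
  p.IsPath ∧ p.length ≤ r ∧ v ≠ u ∧ ¬ lt v u ∧ ∀ w ∈ p.support, w ≠ u → w ≠ v → lt w u

/-- The `r`-backconnectivity of `u`: the maximum number of `r`-qualifying paths from `u`
that are pairwise vertex-disjoint apart from `u`. -/
noncomputable def bcon (G : SimpleGraph V) (lt : V → V → Prop) (r : ℕ) (u : V) : ℕ :=
  sSup {n | ∃ f : Fin n → (v : V) × G.Walk u v,
    (∀ i, IsQual G lt r (f i).2) ∧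
    ∀ i j : Fin n, i ≠ j → ∀ w, w ∈ (f i).2.support → w ∈ (f j).2.support → w = u}

/-- A shortest `r`-qualifying path: an `r`-qualifying `u`–`v` path of length `ℓ` such that
there is no `(ℓ-1)`-qualifying `u`–`v` path. -/
def IsShortQual (G : SimpleGraph V) (lt : V → V → Prop) (r : ℕ) {u v : V} (p : G.Walk u v) :
    Prop :=
  IsQual G lt r p ∧ ¬ ∃ q : G.Walk u v, IsQual G lt (p.length - 1) q

/-- The estimated `r`-backconnectivity of `u`: the maximum number of shortest
`r`-qualifying paths from `u` that are pairwise vertex-disjoint apart from `u`. -/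
noncomputable def est (G : SimpleGraph V) (lt : V → V → Prop) (r : ℕ) (u : V) : ℕ :=
  sSup {n | ∃ f : Fin n → (v : V) × G.Walk u v,
    (∀ i, IsShortQual G lt r (f i).2) ∧
    ∀ i j : Fin n, i ≠ j → ∀ w, w ∈ (f i).2.support → w ∈ (f j).2.support → w = u}

/-- The `r`-admissibility of `G`. -/
noncomputable def admNum [Fintype V] (G : SimpleGraph V) (r : ℕ) : ℕ :=
  ⨅ σ : LinearOrder V, Finset.univ.sup fun u => bcon G (olt σ) r u

/-- `d_v(u, G_σ)`: the least `i` such that `v` is `i`-reachable from `u`. -/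
noncomputable def dval (G : SimpleGraph V) (σ : LinearOrder V) (u v : V) : ℕ :=
  sInf {i | v ∈ reachSet G σ i u}


/-- An instance of 2-Clause 3-SAT: a CNF formula where every clause has at most 3
(distinct) variables, no clause repeats a variable, every clause has at least 2 literals
(single-literal clauses are assumed preprocessed), and each literal (a variable together
with a polarity) appears in exactly 2 clauses. -/
structure TC3SAT where
  n : ℕ
  m : ℕ
  clauses : Fin m → Finset (Fin n × Bool)
  vars_distinct : ∀ i, ∀ l ∈ clauses i, ∀ l' ∈ clauses i, l.1 = l'.1 → l = l'
  clause_le_three : ∀ i, (clauses i).card ≤ 3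
  clause_ge_two : ∀ i, 2 ≤ (clauses i).card
  lit_twice : ∀ l : Fin n × Bool, (Finset.univ.filter fun i => l ∈ clauses i).card = 2

/-- The assignment `A` satisfies the formula `φ`. -/
def TC3SAT.Sat (φ : TC3SAT) (A : Fin φ.n → Bool) : Prop :=
  ∀ i, ∃ l ∈ φ.clauses i, A l.1 = l.2

/-- The formula `φ` is satisfiable. -/
def TC3SAT.Satisfiable (φ : TC3SAT) : Prop := ∃ A, φ.Sat A

/-- Vertices of the weak-2-coloring-number reduction graph `G(φ)`:
six clause vertices per clause, two extra vertices `f_i`, `f'_i` for 2-literal clauses,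
and a pair of literal vertices per variable (`v j true` is `v_j`, `v j false` is `v'_j`). -/
inductive VtxW2 (φ : TC3SAT) where
  | u (i : Fin φ.m) (ℓ : Fin 6)
  | f (i : {i : Fin φ.m // (φ.clauses i).card = 2}) (b : Bool)
  | v (j : Fin φ.n) (b : Bool)
  deriving DecidableEq, Fintype

/-- Base relation of the reduction graph. -/
def relW2 (φ : TC3SAT) : VtxW2 φ → VtxW2 φ → Prop
  | .u i _, .f i' _ => i = i'.1
  | .u i _, .v j b => (j, b) ∈ φ.clauses i
  | .v j _, .v j' _ => j = j'
  | _, _ => False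

/-- The reduction graph `G(φ)` for the weak 2-coloring number. -/
def GW2 (φ : TC3SAT) : SimpleGraph (VtxW2 φ) := SimpleGraph.fromRel (relW2 φ)

section Aux

lemma mem_wreach_adj (G : SimpleGraph V) (σ : LinearOrder V) {u v : V}
    (hadj : G.Adj u v) (hlt : olt σ u v) : v ∈ wreachSet G σ 2 u := by
  refine ⟨hlt, Walk.cons hadj Walk.nil, ?_, by simp, ?_⟩
  · simp [Walk.cons_isPath_iff, hadj.ne]
  · intro w hw h1 h2
    simp [Walk.support_cons] at hw
    rcases hw with rfl | rfl
    · exact absurd rfl h1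
    · exact absurd rfl h2

lemma mem_wreach_two (G : SimpleGraph V) (σ : LinearOrder V) {u w v : V}
    (h1 : G.Adj u w) (h2 : G.Adj w v) (huv : u ≠ v) (hlt : olt σ u v) (hwv : olt σ w v) :
    v ∈ wreachSet G σ 2 u := by
  refine ⟨hlt, Walk.cons h1 (Walk.cons h2 Walk.nil), ?_, by simp, ?_⟩
  · simp [Walk.cons_isPath_iff, h1.ne, h2.ne, huv]
  · intro x hx hxu hxv
    simp [Walk.support_cons] at hx
    rcases hx with rfl | rfl | rfl
    · exact absurd rfl hxu
    · exact hwv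
    · exact absurd rfl hxv

lemma card_le_of_subset_wreach [Fintype V] [DecidableEq V] (G : SimpleGraph V)
    (σ : LinearOrder V) (h : wcolOrd G σ 2 ≤ 5) (u : V) (s : Finset V)
    (hs : ∀ x ∈ s, x ∈ wreachSet G σ 2 u) : s.card ≤ 5 := by
  have h1 : (wreachSet G σ 2 u).ncard ≤ 5 :=
    le_trans (Finset.le_sup (f := fun u => (wreachSet G σ 2 u).ncard) (Finset.mem_univ u)) h
  calc s.card = (↑s : Set V).ncard := (Set.ncard_coe_finset s).symm
    _ ≤ (wreachSet G σ 2 u).ncard :=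
        Set.ncard_le_ncard (fun x hx => hs x (Finset.mem_coe.mp hx)) (Set.toFinite _)
    _ ≤ 5 := h1

lemma card_six [DecidableEq V] {a b c d e f : V}
    (hab : a ≠ b) (hac : a ≠ c) (had : a ≠ d) (hae : a ≠ e) (haf : a ≠ f)
    (hbc : b ≠ c) (hbd : b ≠ d) (hbe : b ≠ e) (hbf : b ≠ f)
    (hcd : c ≠ d) (hce : c ≠ e) (hcf : c ≠ f)
    (hde : d ≠ e) (hdf : d ≠ f) (hef : e ≠ f) :
    ({a, b, c, d, e, f} : Finset V).card = 6 := by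
  rw [Finset.card_insert_of_notMem (by simp [hab, hac, had, hae, haf]),
      Finset.card_insert_of_notMem (by simp [hbc, hbd, hbe, hbf]),
      Finset.card_insert_of_notMem (by simp [hcd, hce, hcf]),
      Finset.card_insert_of_notMem (by simp [hde, hdf]),
      Finset.card_insert_of_notMem (by simp [hef]),
      Finset.card_singleton]

lemma adj_uv {φ : TC3SAT} {i : Fin φ.m} {ℓ : Fin 6} {j : Fin φ.n} {b : Bool}
    (h : (j, b) ∈ φ.clauses i) : (GW2 φ).Adj (VtxW2.u i ℓ) (VtxW2.v j b) :=
  (SimpleGraph.fromRel_adj _ _ _).mpr ⟨by simp, Or.inl h⟩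

lemma adj_vv {φ : TC3SAT} {j : Fin φ.n} {b b' : Bool} (h : b ≠ b') :
    (GW2 φ).Adj (VtxW2.v j b) (VtxW2.v j b') :=
  (SimpleGraph.fromRel_adj _ _ _).mpr ⟨by simp [h], Or.inl rfl⟩

lemma adj_uf {φ : TC3SAT} {i : Fin φ.m} {ℓ : Fin 6}
    {i' : {i : Fin φ.m // (φ.clauses i).card = 2}} (h : i = i'.1) {b : Bool} :
    (GW2 φ).Adj (VtxW2.u i ℓ) (VtxW2.f i' b) :=
  (SimpleGraph.fromRel_adj _ _ _).mpr ⟨by simp, Or.inl h⟩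

lemma exists_low_u (φ : TC3SAT) (σ : LinearOrder (VtxW2 φ))
    (h : wcolOrd (GW2 φ) σ 2 ≤ 5) (i : Fin φ.m) (N : Finset (VtxW2 φ)) (hNe : N.Nonempty)
    (hadj : ∀ n ∈ N, ∀ ℓ : Fin 6, (GW2 φ).Adj n (VtxW2.u i ℓ)) :
    ∃ ℓ0 : Fin 6, ∀ n ∈ N, σ.lt (VtxW2.u i ℓ0) n := by
  letI := σ
  by_contra hcon
  push_neg at hcon
  set w₀ := N.min' hNe with hw₀
  have hw₀mem : w₀ ∈ N := N.min'_mem hNe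
  have hlow : ∀ ℓ : Fin 6, olt σ w₀ (VtxW2.u i ℓ) := by
    intro ℓ
    obtain ⟨n, hn, hnlt⟩ := hcon ℓ
    have hne : n ≠ VtxW2.u i ℓ := ((hadj n hn ℓ).ne)
    have : n < VtxW2.u i ℓ := lt_of_le_of_ne hnlt hne
    exact lt_of_le_of_lt (N.min'_le n hn) this
  have hsub : ∀ x ∈ (Finset.univ.image fun ℓ : Fin 6 => VtxW2.u i ℓ),
      x ∈ wreachSet (GW2 φ) σ 2 w₀ := by
    intro x hx
    simp only [Finset.mem_image, Finset.mem_univ, true_and] at hx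
    obtain ⟨ℓ, rfl⟩ := hx
    exact mem_wreach_adj _ σ (hadj w₀ hw₀mem ℓ) (hlow ℓ)
  have hcard : (Finset.univ.image fun ℓ : Fin 6 => VtxW2.u i ℓ).card = 6 := by
    rw [Finset.card_image_of_injective _ (fun a b hab => by simpa using hab)]
    simp
  have := card_le_of_subset_wreach (GW2 φ) σ h w₀ _ hsub
  omega

lemma main_lemma (φ : TC3SAT) (σ : LinearOrder (VtxW2 φ))
    (h : wcolOrd (GW2 φ) σ 2 ≤ 5) :
    φ.Sat fun j =>
      !(@decide (σ.lt (VtxW2.v j true) (VtxW2.v j false)) (σ.toDecidableLT _ _)) := by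
  letI := σ
  intro i
  by_contra hns
  push_neg at hns
  -- every literal of clause i is falsified
  have hlt : ∀ l ∈ φ.clauses i, olt σ (VtxW2.v l.1 l.2) (VtxW2.v l.1 (!l.2)) := by
    rintro ⟨j, b⟩ hl
    have hne := hns ⟨j, b⟩ hl
    simp only at hne
    by_cases hP : σ.lt (VtxW2.v j true) (VtxW2.v j false)
    · simp only [hP, decide_true, Bool.not_true] at hne
      cases b with
      | false => exact absurd rfl hne
      | true => exact hP
    · simp only [hP, decide_false, Bool.not_false] at hne
      cases b with
      | true => exact absurd rfl hne
      | false =>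
        simp only [Bool.not_false]
        exact lt_of_le_of_ne (le_of_not_gt hP) (by simp)
  have hvar : ∀ l ∈ φ.clauses i, ∀ l' ∈ φ.clauses i, l ≠ l' → l.1 ≠ l'.1 :=
    fun l hl l' hl' hne heq => hne (φ.vars_distinct i l hl l' hl' heq)
  have hcases : (φ.clauses i).card = 2 ∨ (φ.clauses i).card = 3 := by
    have h1 := φ.clause_le_three i
    have h2 := φ.clause_ge_two i
    omega
  rcases hcases with hc2 | hc3
  · -- clause with two literals
    obtain ⟨a, b, hab, hset⟩ := Finset.card_eq_two.mp hc2
    have ha : a ∈ φ.clauses i := by rw [hset]; simp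
    have hb : b ∈ φ.clauses i := by rw [hset]; simp
    have hab1 : a.1 ≠ b.1 := hvar a ha b hb hab
    set fT : VtxW2 φ := VtxW2.f ⟨i, hc2⟩ true with hfT
    set fF : VtxW2 φ := VtxW2.f ⟨i, hc2⟩ false with hfF
    set N : Finset (VtxW2 φ) := {VtxW2.v a.1 a.2, VtxW2.v b.1 b.2, fT, fF} with hN
    have hNadj : ∀ n ∈ N, ∀ ℓ : Fin 6, (GW2 φ).Adj n (VtxW2.u i ℓ) := by
      intro n hn ℓ
      simp only [hN, Finset.mem_insert, Finset.mem_singleton] at hn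
      rcases hn with rfl | rfl | rfl | rfl
      · exact (adj_uv ha).symm
      · exact (adj_uv hb).symm
      · exact (adj_uf rfl).symm
      · exact (adj_uf rfl).symm
    obtain ⟨ℓ0, hlow⟩ := exists_low_u φ σ h i N ⟨VtxW2.v a.1 a.2, by simp [hN]⟩ hNadj
    set u₀ : VtxW2 φ := VtxW2.u i ℓ0 with hu₀
    have hla : olt σ u₀ (VtxW2.v a.1 a.2) := hlow _ (by simp [hN])
    have hlb : olt σ u₀ (VtxW2.v b.1 b.2) := hlow _ (by simp [hN])
    have hlT : olt σ u₀ fT := hlow _ (by simp [hN])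
    have hlF : olt σ u₀ fF := hlow _ (by simp [hN])
    have hsub : ∀ x ∈ ({VtxW2.v a.1 a.2, VtxW2.v b.1 b.2, fT, fF,
        VtxW2.v a.1 (!a.2), VtxW2.v b.1 (!b.2)} : Finset (VtxW2 φ)),
        x ∈ wreachSet (GW2 φ) σ 2 u₀ := by
      intro x hx
      simp only [Finset.mem_insert, Finset.mem_singleton] at hx
      rcases hx with rfl | rfl | rfl | rfl | rfl | rfl
      · exact mem_wreach_adj _ σ (adj_uv ha) hla
      · exact mem_wreach_adj _ σ (adj_uv hb) hlb
      · exact mem_wreach_adj _ σ (adj_uf (i' := ⟨i, hc2⟩) (ℓ := ℓ0) rfl) hlT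
      · exact mem_wreach_adj _ σ (adj_uf (i' := ⟨i, hc2⟩) (ℓ := ℓ0) rfl) hlF
      · exact mem_wreach_two _ σ (adj_uv ha) (adj_vv (by simp)) (by simp [hu₀])
          (lt_trans hla (hlt a ha)) (hlt a ha)
      · exact mem_wreach_two _ σ (adj_uv hb) (adj_vv (by simp)) (by simp [hu₀])
          (lt_trans hlb (hlt b hb)) (hlt b hb)
    have hcard : ({VtxW2.v a.1 a.2, VtxW2.v b.1 b.2, fT, fF,
        VtxW2.v a.1 (!a.2), VtxW2.v b.1 (!b.2)} : Finset (VtxW2 φ)).card = 6 := by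
      apply card_six <;> simp [hfT, hfF, hab1, hab1.symm]
    have := card_le_of_subset_wreach (GW2 φ) σ h u₀ _ hsub
    omega
  · -- clause with three literals
    obtain ⟨a, b, c, hab, hac, hbc, hset⟩ := Finset.card_eq_three.mp hc3
    have ha : a ∈ φ.clauses i := by rw [hset]; simp
    have hb : b ∈ φ.clauses i := by rw [hset]; simp
    have hc : c ∈ φ.clauses i := by rw [hset]; simp
    have hab1 : a.1 ≠ b.1 := hvar a ha b hb hab
    have hac1 : a.1 ≠ c.1 := hvar a ha c hc hac
    have hbc1 : b.1 ≠ c.1 := hvar b hb c hc hbc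
    set N : Finset (VtxW2 φ) :=
      {VtxW2.v a.1 a.2, VtxW2.v b.1 b.2, VtxW2.v c.1 c.2} with hN
    have hNadj : ∀ n ∈ N, ∀ ℓ : Fin 6, (GW2 φ).Adj n (VtxW2.u i ℓ) := by
      intro n hn ℓ
      simp only [hN, Finset.mem_insert, Finset.mem_singleton] at hn
      rcases hn with rfl | rfl | rfl
      · exact (adj_uv ha).symm
      · exact (adj_uv hb).symm
      · exact (adj_uv hc).symm
    obtain ⟨ℓ0, hlow⟩ := exists_low_u φ σ h i N ⟨VtxW2.v a.1 a.2, by simp [hN]⟩ hNadj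
    set u₀ : VtxW2 φ := VtxW2.u i ℓ0 with hu₀
    have hla : olt σ u₀ (VtxW2.v a.1 a.2) := hlow _ (by simp [hN])
    have hlb : olt σ u₀ (VtxW2.v b.1 b.2) := hlow _ (by simp [hN])
    have hlc : olt σ u₀ (VtxW2.v c.1 c.2) := hlow _ (by simp [hN])
    have hsub : ∀ x ∈ ({VtxW2.v a.1 a.2, VtxW2.v b.1 b.2, VtxW2.v c.1 c.2,
        VtxW2.v a.1 (!a.2), VtxW2.v b.1 (!b.2), VtxW2.v c.1 (!c.2)} : Finset (VtxW2 φ)),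
        x ∈ wreachSet (GW2 φ) σ 2 u₀ := by
      intro x hx
      simp only [Finset.mem_insert, Finset.mem_singleton] at hx
      rcases hx with rfl | rfl | rfl | rfl | rfl | rfl
      · exact mem_wreach_adj _ σ (adj_uv ha) hla
      · exact mem_wreach_adj _ σ (adj_uv hb) hlb
      · exact mem_wreach_adj _ σ (adj_uv hc) hlc
      · exact mem_wreach_two _ σ (adj_uv ha) (adj_vv (by simp)) (by simp [hu₀])
          (lt_trans hla (hlt a ha)) (hlt a ha)
      · exact mem_wreach_two _ σ (adj_uv hb) (adj_vv (by simp)) (by simp [hu₀])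
          (lt_trans hlb (hlt b hb)) (hlt b hb)
      · exact mem_wreach_two _ σ (adj_uv hc) (adj_vv (by simp)) (by simp [hu₀])
          (lt_trans hlc (hlt c hc)) (hlt c hc)
    have hcard : ({VtxW2.v a.1 a.2, VtxW2.v b.1 b.2, VtxW2.v c.1 c.2,
        VtxW2.v a.1 (!a.2), VtxW2.v b.1 (!b.2), VtxW2.v c.1 (!c.2)} :
        Finset (VtxW2 φ)).card = 6 := by
      apply card_six <;>
        simp [hab1, hac1, hbc1, hab1.symm, hac1.symm, hbc1.symm]
    have := card_le_of_subset_wreach (GW2 φ) σ h u₀ _ hsub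
    omega

end Aux

/-- If the reduction graph `G(φ)` has weak 2-coloring number at most 5, then `φ` is
satisfiable; moreover, for any witnessing order `σ`, the assignment setting `x_j` false
when `v_j <_σ v'_j` and true otherwise satisfies `φ`. -/
theorem wcol2_le_five_implies_sat (φ : TC3SAT) (h : wcolNum (GW2 φ) 2 ≤ 5) :
    φ.Satisfiable ∧
      ∀ σ : LinearOrder (VtxW2 φ), wcolOrd (GW2 φ) σ 2 ≤ 5 →
        φ.Sat fun j =>
          !(@decide (σ.lt (VtxW2.v j true) (VtxW2.v j false)) (σ.toDecidableLT _ _)) := by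
  have hne : Nonempty (LinearOrder (VtxW2 φ)) :=
    ⟨LinearOrder.lift' (fun v => (Fintype.equivFin (VtxW2 φ)) v) (Equiv.injective _)⟩
  constructor
  · have hmem : wcolNum (GW2 φ) 2 ∈ Set.range (fun σ => wcolOrd (GW2 φ) σ 2) :=
      Nat.sInf_mem (Set.range_nonempty _)
    obtain ⟨σ, hσ⟩ := hmem
    exact ⟨_, main_lemma φ σ (le_trans (le_of_eq hσ) h)⟩
  · exact fun σ hσ => main_lemma φ σ hσ
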